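/- arXiv:2507.02769 — 3 statements merged into one kernel-verified Lean document; each statement's English description precedes it below -/
import Mathlib

section
/- Let ℓ ≥ 1 and t, z ≥ 1 be natural numbers, and set f(x) = x^(2^ℓ). For every function χ assigning to each pair (i, j) ∈ [f(t)] × [f(z)] a nonempty subset of [ℓ], there exist strictly increasing sequences 0 ≤ a₀ < a₁ < ⋯ < a_t ≤ f(t) and 0 ≤ b₀ < b₁ < ⋯ < b_z ≤ f(z) such that the block union B(p, q) := ⋃ { χ(i, j) : a_{p-1} < i ≤ a_p, b_{q-1} < j ≤ b_q } takes the same value for all (p, q) ∈ [t] × [z]. -/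
/-- The union of colors over block `(p,q)` of the block structure `(a,b)`. -/
def homU (χ : ℕ × ℕ → Set ℕ) (a b : ℕ → ℕ) (p q : ℕ) : Set ℕ :=
  ⋃ i ∈ Set.Ioc (a p) (a (p + 1)), ⋃ j ∈ Set.Ioc (b q) (b (q + 1)), χ (i, j)

lemma mem_homU {χ : ℕ × ℕ → Set ℕ} {a b : ℕ → ℕ} {p q : ℕ} {x : ℕ} :
    x ∈ homU χ a b p q ↔
      ∃ i, (a p < i ∧ i ≤ a (p + 1)) ∧ ∃ j, (b q < j ∧ j ≤ b (q + 1)) ∧ x ∈ χ (i, j) := by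
  simp only [homU, Set.mem_iUnion, Set.mem_Ioc, exists_prop]
  try tauto

lemma ioc_split (a : ℕ → ℕ) (ha : StrictMono a) (m n : ℕ) (h : m ≤ n) {x : ℕ} :
    x ∈ Set.Ioc (a m) (a n) ↔ ∃ k, (m ≤ k ∧ k < n) ∧ x ∈ Set.Ioc (a k) (a (k + 1)) := by
  simp only [Set.mem_Ioc]
  constructor
  · rintro ⟨h1, h2⟩
    set P : ℕ → Prop := fun k => a k < x with hP
    have hPm : P m := h1
    set k := Nat.findGreatest P n with hk
    have hkP : P k := Nat.findGreatest_spec h hPm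
    have hmk : m ≤ k := Nat.le_findGreatest h hPm
    have hkn : k ≤ n := Nat.findGreatest_le n
    have hkn' : k < n := by
      rcases lt_or_eq_of_le hkn with h' | h'
      · exact h'
      · exfalso; rw [h'] at hkP; exact absurd h2 (not_le.mpr hkP)
    refine ⟨k, ⟨hmk, hkn'⟩, hkP, ?_⟩
    by_contra hcon
    push_neg at hcon
    exact Nat.findGreatest_is_greatest (Nat.lt_succ_self k) (by omega) hcon
  · rintro ⟨k, ⟨hmk, hkn⟩, h1, h2⟩
    exact ⟨lt_of_le_of_lt (ha.monotone hmk) h1, le_trans h2 (ha.monotone (by omega))⟩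

lemma homU_merge (χ : ℕ × ℕ → Set ℕ) (a b : ℕ → ℕ) (ha : StrictMono a) (hb : StrictMono b)
    (g h : ℕ → ℕ) (p q : ℕ) (hg : g p ≤ g (p + 1)) (hh : h q ≤ h (q + 1)) {x : ℕ} :
    x ∈ homU χ (fun p => a (g p)) (fun q => b (h q)) p q ↔
      ∃ k, (g p ≤ k ∧ k < g (p + 1)) ∧ ∃ l, (h q ≤ l ∧ l < h (q + 1)) ∧ x ∈ homU χ a b k l := by
  constructor
  · intro hx
    rw [mem_homU] at hx
    obtain ⟨i, hi, j, hj, hxij⟩ := hx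
    rw [← Set.mem_Ioc, ioc_split a ha _ _ hg] at hi
    rw [← Set.mem_Ioc, ioc_split b hb _ _ hh] at hj
    obtain ⟨k, hk, hik⟩ := hi
    obtain ⟨l, hl, hjl⟩ := hj
    rw [Set.mem_Ioc] at hik hjl
    exact ⟨k, hk, l, hl, mem_homU.mpr ⟨i, hik, j, hjl, hxij⟩⟩
  · rintro ⟨k, hk, l, hl, hx⟩
    rw [mem_homU] at hx
    obtain ⟨i, hi, j, hj, hxij⟩ := hx
    refine mem_homU.mpr ⟨i, ?_, j, ?_, hxij⟩
    · rw [← Set.mem_Ioc, ioc_split a ha _ _ hg]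
      exact ⟨k, hk, Set.mem_Ioc.mpr hi⟩
    · rw [← Set.mem_Ioc, ioc_split b hb _ _ hh]
      exact ⟨l, hl, Set.mem_Ioc.mpr hj⟩

lemma hom_aux (ℓ : ℕ) : ∀ t z : ℕ, 1 ≤ t → 1 ≤ z → ∀ χ : ℕ × ℕ → Set ℕ,
    (∀ i j, 1 ≤ i → i ≤ t ^ 2 ^ ℓ → 1 ≤ j → j ≤ z ^ 2 ^ ℓ → χ (i, j) ⊆ Set.Icc 1 ℓ) →
    ∃ a b : ℕ → ℕ, StrictMono a ∧ StrictMono b ∧ a t ≤ t ^ 2 ^ ℓ ∧ b z ≤ z ^ 2 ^ ℓ ∧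
      ∀ p q, p < t → q < z → homU χ a b p q = homU χ a b 0 0 := by
  induction ℓ with
  | zero =>
    intro t z ht hz χ hsub
    refine ⟨id, id, strictMono_id, strictMono_id, by simp, by simp, ?_⟩
    have key : ∀ p q, p < t → q < z → homU χ id id p q = ∅ := by
      intro p q hp hq
      apply Set.eq_empty_iff_forall_notMem.mpr
      intro x hx
      rw [mem_homU] at hx
      obtain ⟨i, hi, j, hj, hx⟩ := hx
      simp only [id] at hi hj
      have hsub' := hsub i j (by omega) (by simp only [pow_zero, pow_one]; omega)
        (by omega) (by simp only [pow_zero, pow_one]; omega)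
      have := hsub' hx
      simp only [Set.mem_Icc] at this
      omega
    intro p q hp hq
    rw [key p q hp hq, key 0 0 ht hz]
  | succ ℓ ih =>
    intro t z ht hz χ hsub
    have hpow : ∀ x : ℕ, x ^ 2 ^ (ℓ + 1) = (x ^ 2) ^ 2 ^ ℓ := by
      intro x
      rw [← pow_mul, ← pow_succ']
    set χ' : ℕ × ℕ → Set ℕ := fun p => χ p \ {ℓ + 1} with hχ'
    have ht2 : 1 ≤ t ^ 2 := Nat.one_le_pow _ _ ht
    have hz2 : 1 ≤ z ^ 2 := Nat.one_le_pow _ _ hz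
    obtain ⟨a, b, ha, hb, hat, hbz, hconst⟩ :=
      ih (t ^ 2) (z ^ 2) ht2 hz2 χ' (by
        intro i j hi1 hi2 hj1 hj2 x hx
        obtain ⟨hx1, hx2⟩ := hx
        have := hsub i j hi1 (by rw [hpow]; exact hi2) hj1 (by rw [hpow]; exact hj2) hx1
        simp only [Set.mem_Icc] at this ⊢
        simp only [Set.mem_singleton_iff] at hx2
        omega)
    set S : Set ℕ := homU χ' a b 0 0 with hS
    have hsand : ∀ p q, p < t ^ 2 → q < z ^ 2 →
        S ⊆ homU χ a b p q ∧ homU χ a b p q ⊆ S ∪ {ℓ + 1} := by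
      intro p q hp hq
      constructor
      · rw [← hconst p q hp hq]
        intro x hx
        rw [mem_homU] at hx ⊢
        obtain ⟨i, hi, j, hj, hx⟩ := hx
        exact ⟨i, hi, j, hj, hx.1⟩
      · intro x hx
        rw [mem_homU] at hx
        obtain ⟨i, hi, j, hj, hx⟩ := hx
        by_cases hxl : x = ℓ + 1
        · exact Or.inr (by simp [hxl])
        · refine Or.inl ?_
          rw [← hconst p q hp hq, mem_homU]
          exact ⟨i, hi, j, hj, hx, by simpa using hxl⟩
    by_cases hA : ∃ p0 q0, p0 + t ≤ t ^ 2 ∧ q0 + z ≤ z ^ 2 ∧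
        ∀ p q, p < t → q < z → (ℓ + 1) ∉ homU χ a b (p0 + p) (q0 + q)
    · obtain ⟨p0, q0, hp0, hq0, hout⟩ := hA
      refine ⟨fun p => a (p0 + p), fun q => b (q0 + q), ?_, ?_, ?_, ?_, ?_⟩
      · intro x y hxy; exact ha (by omega)
      · intro x y hxy; exact hb (by omega)
      · calc a (p0 + t) ≤ a (t ^ 2) := ha.monotone hp0
          _ ≤ (t ^ 2) ^ 2 ^ ℓ := hat
          _ = t ^ 2 ^ (ℓ + 1) := (hpow t).symm
      · calc b (q0 + z) ≤ b (z ^ 2) := hb.monotone hq0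
          _ ≤ (z ^ 2) ^ 2 ^ ℓ := hbz
          _ = z ^ 2 ^ (ℓ + 1) := (hpow z).symm
      · have key : ∀ p q, p < t → q < z →
            homU χ (fun p => a (p0 + p)) (fun q => b (q0 + q)) p q = S := by
          intro p q hp hq
          have heq : homU χ (fun p => a (p0 + p)) (fun q => b (q0 + q)) p q =
              homU χ a b (p0 + p) (q0 + q) := rfl
          rw [heq]
          have hplt : p0 + p < t ^ 2 := by omega
          have hqlt : q0 + q < z ^ 2 := by omega
          apply Set.Subset.antisymm
          · intro x hx
            rcases (hsand _ _ hplt hqlt).2 hx with h | h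
            · exact h
            · simp only [Set.mem_singleton_iff] at h
              exact absurd (h ▸ hx) (hout p q hp hq)
          · exact (hsand _ _ hplt hqlt).1
        intro p q hp hq
        rw [key p q hp hq, key 0 0 ht hz]
    · push_neg at hA
      refine ⟨fun p => a (p * t), fun q => b (q * z), ?_, ?_, ?_, ?_, ?_⟩
      · intro x y hxy
        exact ha (mul_lt_mul_of_pos_right hxy (by omega))
      · intro x y hxy
        exact hb (mul_lt_mul_of_pos_right hxy (by omega))
      · show a (t * t) ≤ t ^ 2 ^ (ℓ + 1)
        rw [← pow_two]
        calc a (t ^ 2) ≤ (t ^ 2) ^ 2 ^ ℓ := hat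
          _ = t ^ 2 ^ (ℓ + 1) := (hpow t).symm
      · show b (z * z) ≤ z ^ 2 ^ (ℓ + 1)
        rw [← pow_two]
        calc b (z ^ 2) ≤ (z ^ 2) ^ 2 ^ ℓ := hbz
          _ = z ^ 2 ^ (ℓ + 1) := (hpow z).symm
      · have key : ∀ p q, p < t → q < z →
            homU χ (fun p => a (p * t)) (fun q => b (q * z)) p q = S ∪ {ℓ + 1} := by
          intro p q hp hq
          have e1 : p * t + t = (p + 1) * t := by ring
          have e2 : q * z + z = (q + 1) * z := by ring
          have hub : (p + 1) * t ≤ t ^ 2 := by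
            have : (p + 1) * t ≤ t * t := Nat.mul_le_mul_right t (by omega)
            rw [sq]; exact this
          have hvb : (q + 1) * z ≤ z ^ 2 := by
            have : (q + 1) * z ≤ z * z := Nat.mul_le_mul_right z (by omega)
            rw [sq]; exact this
          have hg : p * t ≤ (p + 1) * t := by omega
          have hh : q * z ≤ (q + 1) * z := by omega
          have hmg := homU_merge χ a b ha hb (fun p => p * t) (fun q => q * z) p q hg hh
            (x := 0)
          apply Set.Subset.antisymm
          · intro x hx
            obtain ⟨k, hk, l, hl, hx⟩ :=
              (homU_merge χ a b ha hb (fun p => p * t) (fun q => q * z) p q hg hh).mp hx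
            have hk' : p * t ≤ k ∧ k < (p + 1) * t := hk
            have hl' : q * z ≤ l ∧ l < (q + 1) * z := hl
            exact (hsand k l (by omega) (by omega)).2 hx
          · intro x hx
            apply (homU_merge χ a b ha hb (fun p => p * t) (fun q => q * z) p q hg hh).mpr
            rcases hx with hx | hx
            · refine ⟨p * t, ⟨le_refl _, show p * t < (p + 1) * t by omega⟩,
                q * z, ⟨le_refl _, show q * z < (q + 1) * z by omega⟩, ?_⟩
              exact (hsand (p * t) (q * z) (by omega) (by omega)).1 hx
            · simp only [Set.mem_singleton_iff] at hx
              obtain ⟨i, j, hi, hj, hmem⟩ := hA (p * t) (q * z) (by omega) (by omega)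
              refine ⟨p * t + i, ⟨show p * t ≤ p * t + i by omega,
                  show p * t + i < (p + 1) * t by omega⟩,
                q * z + j, ⟨show q * z ≤ q * z + j by omega,
                  show q * z + j < (q + 1) * z by omega⟩, ?_⟩
              rw [hx]; exact hmem
        intro p q hp hq
        rw [key p q hp hq, key 0 0 ht hz]

/-- Homogenization lemma (2-dimensional combinatorial core): a brick-coloring
of an `f(t) × f(z)` array by nonempty subsets of `[ℓ]`, with `f x = x ^ 2 ^ ℓ`,
admits a `t × z` contiguous block structure on which the union-coloring is constant. -/
theorem stmt_0 (ℓ t z : ℕ) (hℓ : 1 ≤ ℓ) (ht : 1 ≤ t) (hz : 1 ≤ z)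
    (χ : ℕ × ℕ → Set ℕ)
    (hne : ∀ i j, 1 ≤ i → i ≤ t ^ 2 ^ ℓ → 1 ≤ j → j ≤ z ^ 2 ^ ℓ → (χ (i, j)).Nonempty)
    (hsub : ∀ i j, 1 ≤ i → i ≤ t ^ 2 ^ ℓ → 1 ≤ j → j ≤ z ^ 2 ^ ℓ →
      χ (i, j) ⊆ Set.Icc 1 ℓ) :
    ∃ a b : ℕ → ℕ,
      (∀ p, p < t → a p < a (p + 1)) ∧ (∀ q, q < z → b q < b (q + 1)) ∧
      a t ≤ t ^ 2 ^ ℓ ∧ b z ≤ z ^ 2 ^ ℓ ∧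
      ∀ p p' q q', p < t → p' < t → q < z → q' < z →
        (⋃ i ∈ Set.Ioc (a p) (a (p + 1)), ⋃ j ∈ Set.Ioc (b q) (b (q + 1)), χ (i, j)) =
        (⋃ i ∈ Set.Ioc (a p') (a (p' + 1)), ⋃ j ∈ Set.Ioc (b q') (b (q' + 1)), χ (i, j)) := by
  obtain ⟨a, b, ha, hb, hat, hbz, hconst⟩ := hom_aux ℓ t z ht hz χ hsub
  refine ⟨a, b, fun p _ => ha (Nat.lt_succ_self p), fun q _ => hb (Nat.lt_succ_self q),
    hat, hbz, ?_⟩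
  intro p p' q q' hp hp' hq hq'
  have h1 := hconst p q hp hq
  have h2 := hconst p' q' hp' hq'
  show homU χ a b p q = homU χ a b p' q'
  rw [h1, h2]
end

section
/- Let ℓ ≥ 1 and t ≥ 1 be natural numbers. For every function χ assigning to each i ∈ [t^(2^ℓ)] a nonempty subset of [ℓ], there exists a strictly increasing sequence 0 ≤ a₀ < a₁ < ⋯ < a_t ≤ t^(2^ℓ) such that the interval union B(p) := ⋃ { χ(i) : a_{p-1} < i ≤ a_p } takes the same value for all p ∈ [t]. -/
/-- Key lemma: if all cells in `(a, a + t^s]` have nonempty colors contained in a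
finite set `S` of at most `s` colors, then there are `t` consecutive intervals
inside with equal unions. -/
theorem key_hom (t : ℕ) (ht : 1 ≤ t) (χ : ℕ → Set ℕ) :
    ∀ s (S : Finset ℕ), S.card ≤ s → ∀ a : ℕ,
    (∀ i, a < i → i ≤ a + t ^ s → (χ i).Nonempty) →
    (∀ i, a < i → i ≤ a + t ^ s → χ i ⊆ ↑S) →
    ∃ b : ℕ → ℕ, (∀ p, p < t → b p < b (p + 1)) ∧ b t ≤ a + t ^ s ∧
      ∀ p p', p < t → p' < t →
        (⋃ i ∈ Set.Ioc (b p) (b (p + 1)), χ i) =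
        (⋃ i ∈ Set.Ioc (b p') (b (p' + 1)), χ i) := by
  intro s
  induction s with
  | zero =>
    intro S hS a hne hsub
    exfalso
    have h1 := hne (a + 1) (by omega) (by simp)
    have h2 := hsub (a + 1) (by omega) (by simp)
    have hSempty : S = ∅ := Finset.card_eq_zero.mp (by omega)
    obtain ⟨y, hy⟩ := h1
    have := h2 hy
    rw [hSempty] at this
    simp at this
  | succ s ih =>
    intro S hS a hne hsub
    have htp : 1 ≤ t ^ s := Nat.one_le_pow _ _ (by omega)
    have hpow : t ^ (s + 1) = t ^ s * t := pow_succ t s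
    by_cases hcase : ∃ a', a ≤ a' ∧ a' + t ^ s ≤ a + t ^ (s + 1) ∧
        ∃ x ∈ S, ∀ i, a' < i → i ≤ a' + t ^ s → x ∉ χ i
    · obtain ⟨a', ha1, ha2, x, hxS, hxmiss⟩ := hcase
      have hcard : (S.erase x).card ≤ s := by
        have h := Finset.card_erase_of_mem hxS
        have h1 : 1 ≤ S.card := Finset.card_pos.mpr ⟨x, hxS⟩
        omega
      obtain ⟨b, hmono, hle, hequ⟩ := ih (S.erase x) hcard a'
        (fun i h1 h2 => hne i (by omega) (by omega))
        (fun i h1 h2 => by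
          intro y hy
          simp only [Finset.coe_erase, Set.mem_diff, Set.mem_singleton_iff]
          refine ⟨hsub i (by omega) (by omega) hy, fun hyx => ?_⟩
          exact hxmiss i h1 h2 (hyx ▸ hy))
      exact ⟨b, hmono, by omega, hequ⟩
    · push_neg at hcase
      refine ⟨fun p => a + p * t ^ s, ?_, ?_, ?_⟩
      · intro p hp
        show a + p * t ^ s < a + (p + 1) * t ^ s
        have : (p + 1) * t ^ s = p * t ^ s + t ^ s := by ring
        omega
      · show a + t * t ^ s ≤ a + t ^ (s + 1)
        have : t * t ^ s = t ^ (s + 1) := by rw [hpow]; ring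
        omega
      · have hunion : ∀ p, p < t →
            (⋃ i ∈ Set.Ioc (a + p * t ^ s) (a + (p + 1) * t ^ s), χ i) = ↑S := by
          intro p hp
          have hptop : (p + 1) * t ^ s ≤ t ^ (s + 1) := by
            rw [hpow, mul_comm (t ^ s) t]
            exact Nat.mul_le_mul_right _ (by omega)
          apply Set.Subset.antisymm
          · intro y hy
            simp only [Set.mem_iUnion, Set.mem_Ioc] at hy
            obtain ⟨i, ⟨hi1, hi2⟩, hyi⟩ := hy
            exact hsub i (by omega) (by omega) hyi
          · intro x hxS
            obtain ⟨i, hi1, hi2, hxi⟩ := hcase (a + p * t ^ s) (by omega)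
              (by
                have : p * t ^ s + t ^ s = (p + 1) * t ^ s := by ring
                omega) x (by simpa using hxS)
            simp only [Set.mem_iUnion, Set.mem_Ioc]
            have : a + p * t ^ s + t ^ s = a + (p + 1) * t ^ s := by ring
            exact ⟨i, ⟨hi1, by omega⟩, hxi⟩
        intro p p' hp hp'
        rw [hunion p hp, hunion p' hp']

/-- Homogenization lemma (1-dimensional / ladder version): a coloring of the
`t ^ 2 ^ ℓ` cells of a sequence by nonempty subsets of `[ℓ]` admits `t`
contiguous intervals whose union-colorings all coincide. -/
theorem stmt_1 (ℓ t : ℕ) (hℓ : 1 ≤ ℓ) (ht : 1 ≤ t)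
    (χ : ℕ → Set ℕ)
    (hne : ∀ i, 1 ≤ i → i ≤ t ^ 2 ^ ℓ → (χ i).Nonempty)
    (hsub : ∀ i, 1 ≤ i → i ≤ t ^ 2 ^ ℓ → χ i ⊆ Set.Icc 1 ℓ) :
    ∃ a : ℕ → ℕ,
      (∀ p, p < t → a p < a (p + 1)) ∧ a t ≤ t ^ 2 ^ ℓ ∧
      ∀ p p', p < t → p' < t →
        (⋃ i ∈ Set.Ioc (a p) (a (p + 1)), χ i) =
        (⋃ i ∈ Set.Ioc (a p') (a (p' + 1)), χ i) := by
  have hbound : t ^ ℓ ≤ t ^ 2 ^ ℓ :=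
    Nat.pow_le_pow_right ht (le_of_lt (Nat.lt_two_pow_self (n := ℓ)))
  obtain ⟨b, hmono, hle, hequ⟩ := key_hom t ht χ ℓ (Finset.Icc 1 ℓ) (by simp) 0
    (fun i h1 h2 => hne i (by omega) (by omega))
    (fun i h1 h2 => by
      have h := hsub i (by omega) (by omega)
      intro y hy
      simpa [Finset.coe_Icc] using h hy)
  exact ⟨b, hmono, by omega, hequ⟩
end

section
/- Let n ≥ 1 and let Γ be the (n × n)-grid graph with vertex set [n] × [n]. For every separation (A, B) of Γ of order < n, there exists an index i ∈ [n] and an index j ∈ [n] such that either the entire i-th row and the entire j-th column are contained in A \ B, or the entire i-th row and the entire j-th column are contained in B \ A. -/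
/-- A separation of a graph `G`: `A ∪ B = V(G)` and no edge of `G` joins
`A \ B` to `B \ A`. -/
def IsSep {V : Type*} (G : SimpleGraph V) (A B : Set V) : Prop :=
  A ∪ B = Set.univ ∧ ∀ u v, G.Adj u v → ¬(u ∈ A \ B ∧ v ∈ B \ A)

/-- The order of a separation `(A, B)` is `|A ∩ B|`. -/
noncomputable def sepOrder {V : Type*} (A B : Set V) : ℕ := (A ∩ B).ncard

/-- `G[A₁] ∪ G[A₂] ∪ G[A₃] = G`: every vertex and every edge of `G` lies
inside one of the three induced subgraphs. -/
def Covers {V : Type*} (G : SimpleGraph V) (A₁ A₂ A₃ : Set V) : Prop :=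
  A₁ ∪ A₂ ∪ A₃ = Set.univ ∧
    ∀ u v, G.Adj u v →
      (u ∈ A₁ ∧ v ∈ A₁) ∨ (u ∈ A₂ ∧ v ∈ A₂) ∨ (u ∈ A₃ ∧ v ∈ A₃)

/-- A tangle of order `k` in `G`: a set of separations of order `< k` that
orients every such separation (exactly one of `(A,B)`, `(B,A)` is in `T`) and
such that no three small sides cover `G`. -/
def IsTangle {V : Type*} (G : SimpleGraph V) (k : ℕ) (T : Set (Set V × Set V)) : Prop :=
  (∀ p ∈ T, IsSep G p.1 p.2 ∧ sepOrder p.1 p.2 < k) ∧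
  (∀ A B : Set V, IsSep G A B → sepOrder A B < k → ((A, B) ∈ T ↔ (B, A) ∉ T)) ∧
  (∀ p₁ ∈ T, ∀ p₂ ∈ T, ∀ p₃ ∈ T, ¬ Covers G p₁.1 p₂.1 p₃.1)

/-- The `(n × n)`-grid graph: vertices `[n] × [n]`, edges between vertices
differing by `1` in exactly one coordinate. -/
def gridGraph (n : ℕ) : SimpleGraph (Fin n × Fin n) :=
  SimpleGraph.fromRel (fun u v =>
    (u.1 = v.1 ∧ u.2.val + 1 = v.2.val) ∨ (u.2 = v.2 ∧ u.1.val + 1 = v.1.val))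

/-- The `i`-th row of the grid. -/
def gridRow (n : ℕ) (i : Fin n) : Set (Fin n × Fin n) := {p | p.1 = i}

/-- The `j`-th column of the grid. -/
def gridCol (n : ℕ) (j : Fin n) : Set (Fin n × Fin n) := {p | p.2 = j}


lemma chainSides {n : ℕ} (hn : 0 < n) (A B : Set (Fin n × Fin n))
    (hsep : IsSep (gridGraph n) A B)
    (f : ℕ → Fin n × Fin n)
    (hadj : ∀ k, k + 1 < n → (gridGraph n).Adj (f k) (f (k+1)))
    (havoid : ∀ k, k < n → f k ∉ A ∩ B) :
    (∀ k, k < n → f k ∈ A \ B) ∨ (∀ k, k < n → f k ∈ B \ A) := by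
  have huniv : ∀ p : Fin n × Fin n, p ∈ A ∪ B := by
    intro p; rw [hsep.1]; trivial
  have side : ∀ p, p ∉ A ∩ B → p ∈ A \ B ∨ p ∈ B \ A := by
    intro p hp
    rcases huniv p with h | h
    · left; exact ⟨h, fun hb => hp ⟨h, hb⟩⟩
    · right; exact ⟨h, fun ha => hp ⟨ha, h⟩⟩
  have step : ∀ k, k + 1 < n →
      ((f k ∈ A \ B → f (k+1) ∈ A \ B) ∧ (f k ∈ B \ A → f (k+1) ∈ B \ A)) := by
    intro k hk
    have hav := havoid (k+1) hk
    constructor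
    · intro h
      rcases side _ hav with h' | h'
      · exact h'
      · exact absurd ⟨h, h'⟩ (hsep.2 _ _ (hadj k hk))
    · intro h
      rcases side _ hav with h' | h'
      · exact absurd ⟨h', h⟩ (hsep.2 _ _ (hadj k hk).symm)
      · exact h'
  rcases side (f 0) (havoid 0 hn) with h0 | h0
  · left
    intro k hk
    induction k with
    | zero => exact h0
    | succ m ih => exact (step m hk).1 (ih (by omega))
  · right
    intro k hk
    induction k with
    | zero => exact h0
    | succ m ih => exact (step m hk).2 (ih (by omega))

lemma grid_adj_row {n : ℕ} {i : Fin n} {j j' : Fin n} (h : (j : ℕ) + 1 = j') :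
    (gridGraph n).Adj (i, j) (i, j') := by
  rw [gridGraph, SimpleGraph.fromRel_adj]
  refine ⟨?_, Or.inl (Or.inl ⟨rfl, h⟩)⟩
  intro he
  have : j = j' := (Prod.mk.injEq _ _ _ _ ▸ he).2
  subst this; omega

lemma grid_adj_col {n : ℕ} {i i' : Fin n} {j : Fin n} (h : (i : ℕ) + 1 = i') :
    (gridGraph n).Adj (i, j) (i', j) := by
  rw [gridGraph, SimpleGraph.fromRel_adj]
  refine ⟨?_, Or.inl (Or.inr ⟨rfl, h⟩)⟩
  intro he
  have : i = i' := (Prod.mk.injEq _ _ _ _ ▸ he).1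
  subst this; omega

/-- Every separation of the `(n × n)`-grid of order `< n` has a full row and a
full column entirely on one side (in `A \ B` or in `B \ A`). -/
theorem stmt_7 (n : ℕ) (hn : 1 ≤ n) (A B : Set (Fin n × Fin n))
    (hsep : IsSep (gridGraph n) A B) (hord : sepOrder A B < n) :
    ∃ i j : Fin n,
      (gridRow n i ⊆ A \ B ∧ gridCol n j ⊆ A \ B) ∨
      (gridRow n i ⊆ B \ A ∧ gridCol n j ⊆ B \ A) := by

  classical
  have hn' : 0 < n := hn
  have hfin : (A ∩ B).Finite := Set.toFinite _
  have hcard : (A ∩ B).ncard < n := hord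
  -- find a row avoiding A ∩ B
  have hrow : ∃ i : Fin n, ∀ j : Fin n, (i, j) ∉ A ∩ B := by
    by_contra h
    push_neg at h
    choose g hg using h
    have hinj : Function.Injective (fun i : Fin n => ((i, g i) : Fin n × Fin n)) := by
      intro a b hab
      exact congrArg Prod.fst hab
    have hsub : Set.range (fun i : Fin n => ((i, g i) : Fin n × Fin n)) ⊆ A ∩ B :=
      Set.range_subset_iff.mpr hg
    have h1 : n ≤ (A ∩ B).ncard := by
      have := Set.ncard_le_ncard hsub hfin
      rwa [← Set.image_univ, Set.ncard_image_of_injective _ hinj, Set.ncard_univ,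
        Nat.card_eq_fintype_card, Fintype.card_fin] at this
    omega
  have hcol : ∃ j : Fin n, ∀ i : Fin n, (i, j) ∉ A ∩ B := by
    by_contra h
    push_neg at h
    choose g hg using h
    have hinj : Function.Injective (fun j : Fin n => ((g j, j) : Fin n × Fin n)) := by
      intro a b hab
      exact congrArg Prod.snd hab
    have hsub : Set.range (fun j : Fin n => ((g j, j) : Fin n × Fin n)) ⊆ A ∩ B :=
      Set.range_subset_iff.mpr hg
    have h1 : n ≤ (A ∩ B).ncard := by
      have := Set.ncard_le_ncard hsub hfin
      rwa [← Set.image_univ, Set.ncard_image_of_injective _ hinj, Set.ncard_univ,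
        Nat.card_eq_fintype_card, Fintype.card_fin] at this
    omega
  obtain ⟨i, hi⟩ := hrow
  obtain ⟨j, hj⟩ := hcol
  refine ⟨i, j, ?_⟩
  set fr : ℕ → Fin n × Fin n := fun k => (i, ⟨k % n, Nat.mod_lt k hn'⟩) with hfr
  set fc : ℕ → Fin n × Fin n := fun k => (⟨k % n, Nat.mod_lt k hn'⟩, j) with hfc
  have hfr_eq : ∀ j' : Fin n, fr (j' : ℕ) = (i, j') := by
    intro j'; simp [hfr, Nat.mod_eq_of_lt j'.isLt, Fin.ext_iff]
  have hfc_eq : ∀ i' : Fin n, fc (i' : ℕ) = (i', j) := by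
    intro i'; simp [hfc, Nat.mod_eq_of_lt i'.isLt, Fin.ext_iff]
  have hrchain := chainSides hn' A B hsep fr
    (fun k hk => by
      apply grid_adj_row
      simp [Nat.mod_eq_of_lt (by omega : k < n), Nat.mod_eq_of_lt hk])
    (fun k hk => by
      have := hi ⟨k % n, Nat.mod_lt k hn'⟩
      simpa [hfr] using this)
  have hcchain := chainSides hn' A B hsep fc
    (fun k hk => by
      apply grid_adj_col
      simp [Nat.mod_eq_of_lt (by omega : k < n), Nat.mod_eq_of_lt hk])
    (fun k hk => by
      have := hj ⟨k % n, Nat.mod_lt k hn'⟩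
      simpa [hfc] using this)
  have hrowsub : ∀ (S : Set (Fin n × Fin n)), (∀ k, k < n → fr k ∈ S) →
      gridRow n i ⊆ S := by
    intro S hS p hp
    have hp1 : p.1 = i := hp
    have := hS p.2 p.2.isLt
    rw [hfr_eq p.2] at this
    have : (p.1, p.2) ∈ S := by rwa [hp1]
    simpa using this
  have hcolsub : ∀ (S : Set (Fin n × Fin n)), (∀ k, k < n → fc k ∈ S) →
      gridCol n j ⊆ S := by
    intro S hS p hp
    have hp2 : p.2 = j := hp
    have := hS p.1 p.1.isLt
    rw [hfc_eq p.1] at this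
    have : (p.1, p.2) ∈ S := by rwa [hp2]
    simpa using this
  rcases hrchain with hrA | hrB <;> rcases hcchain with hcA | hcB
  · exact Or.inl ⟨hrowsub _ hrA, hcolsub _ hcA⟩
  · -- row in A\B, col in B\A : contradiction at (i,j)
    exfalso
    have h1 : (i, j) ∈ A \ B := by have := hrA j j.isLt; rwa [hfr_eq] at this
    have h2 : (i, j) ∈ B \ A := by have := hcB i i.isLt; rwa [hfc_eq] at this
    exact h1.2 h2.1
  · exfalso
    have h1 : (i, j) ∈ B \ A := by have := hrB j j.isLt; rwa [hfr_eq] at this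
    have h2 : (i, j) ∈ A \ B := by have := hcA i i.isLt; rwa [hfc_eq] at this
    exact h2.2 h1.1
  · exact Or.inr ⟨hrowsub _ hrB, hcolsub _ hcB⟩
end
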